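/- Let G be a connected graph with n vertices and exactly n − 2 + ℓ edges, where ℓ ≥ 1. Then the treewidth of G is at most ℓ. -/

import Mathlib

noncomputable section

open SimpleGraph

/-- Deleting a non-bridge edge of a connected graph keeps it connected. -/
lemma connected_deleteEdge_aux {V : Type} {G : SimpleGraph V} {v w : V}
    (hG : G.Connected)
    (hr : (G.deleteEdges {s(v, w)}).Reachable v w) :
    (G.deleteEdges {s(v, w)}).Connected := by
  have hne : Nonempty V := hG.nonempty
  refine ⟨fun a b => ?_⟩
  obtain ⟨p⟩ := hG.preconnected a b
  induction p with
  | nil => exact Reachable.refl _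
  | cons h q ih =>
    rename_i x y z
    refine Reachable.trans ?_ ih
    by_cases he : s(x, y) = s(v, w)
    · rw [Sym2.eq_iff] at he
      rcases he with ⟨hx, hy⟩ | ⟨hx, hy⟩
      · subst hx; subst hy; exact hr
      · subst hx; subst hy; exact hr.symm
    · exact (SimpleGraph.deleteEdges_adj.mpr ⟨h, by simpa using he⟩).reachable

/-- Every connected graph on a finite vertex type has a spanning tree. -/
lemma exists_spanning_tree {V : Type} [Fintype V] (G : SimpleGraph V)
    (hG : G.Connected) : ∃ T : SimpleGraph V, T ≤ G ∧ T.IsTree := by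
  classical
  generalize hn : G.edgeSet.ncard = n
  induction n using Nat.strong_induction_on generalizing G with
  | _ n ih =>
    by_cases hac : G.IsAcyclic
    · exact ⟨G, le_rfl, ⟨hG, hac⟩⟩
    · rw [isAcyclic_iff_forall_adj_isBridge] at hac
      push_neg at hac
      obtain ⟨v, w, hadj, hbr⟩ := hac
      rw [isBridge_iff] at hbr
      push_neg at hbr
      have hreach : (G.deleteEdges {s(v, w)}).Reachable v w := hbr
      have hconn' := connected_deleteEdge_aux hG hreach
      have hlt : (G.deleteEdges {s(v, w)}).edgeSet.ncard < n := by
        rw [← hn, SimpleGraph.edgeSet_deleteEdges]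
        refine Set.ncard_lt_ncard ?_ (G.edgeSet.toFinite)
        refine ⟨Set.diff_subset, fun hsub => ?_⟩
        exact (hsub (G.mem_edgeSet.mpr hadj)).2 rfl
      obtain ⟨T, hT1, hT2⟩ := ih _ hlt _ hconn' rfl
      exact ⟨T, hT1.trans (by exact sdiff_le), hT2⟩

/-- Canonical path from `v` to the root `r` in a connected graph. -/
def rootPath {V : Type} [DecidableEq V] {T : SimpleGraph V} (hc : T.Connected) (r v : V) :
    T.Walk v r := (hc.preconnected v r).some.toPath.1

lemma rootPath_isPath {V : Type} [DecidableEq V] {T : SimpleGraph V} (hc : T.Connected) (r v : V) :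
    (rootPath hc r v).IsPath := (hc.preconnected v r).some.toPath.2

/-- The parent of a vertex in the tree rooted at `r`. -/
def par {V : Type} [DecidableEq V] {T : SimpleGraph V} (hc : T.Connected) (r v : V) : V :=
  if v = r then r else (rootPath hc r v).getVert 1

lemma par_self {V : Type} [DecidableEq V] {T : SimpleGraph V} (hc : T.Connected) (r : V) :
    par hc r r = r := by simp [par]

lemma adj_par {V : Type} [DecidableEq V] {T : SimpleGraph V} (hc : T.Connected) (r : V) {v : V}
    (hv : v ≠ r) : T.Adj v (par hc r v) := by
  unfold par
  rw [if_neg hv]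
  have hlen : 0 < (rootPath hc r v).length := by
    by_contra hl
    push_neg at hl
    exact hv (Walk.eq_of_length_eq_zero (Nat.le_zero.mp hl))
  have := (rootPath hc r v).adj_getVert_succ hlen
  simpa using this

lemma par_adj_cases {V : Type} [DecidableEq V] {T : SimpleGraph V} (hT : T.IsTree) (r : V)
    {u v : V} (h : T.Adj u v) :
    par hT.isConnected r u = v ∨ par hT.isConnected r v = u := by
  have huniq : ∀ {a b : V} (q₁ q₂ : T.Walk a b), q₁.IsPath → q₂.IsPath → q₁ = q₂ := by
    intro a b q₁ q₂ h₁ h₂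
    exact congrArg Subtype.val
      (isAcyclic_iff_path_unique.mp hT.2 (⟨q₁, h₁⟩ : T.Path a b) ⟨q₂, h₂⟩)
  by_cases hu : u = r
  · subst hu
    right
    have hv : v ≠ u := h.ne'
    have hpath : (Walk.cons h.symm Walk.nil : T.Walk v u).IsPath := by simp [h.ne']
    have heq := huniq (rootPath hT.isConnected u v) (Walk.cons h.symm Walk.nil)
      (rootPath_isPath _ _ _) hpath
    unfold par
    rw [if_neg hv, heq]
    simp [Walk.getVert_cons_succ, Walk.getVert_zero]
  · by_cases hvr : v = r
    · subst hvr
      left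
      have hpath : (Walk.cons h Walk.nil : T.Walk u v).IsPath := by simp [h.ne]
      have heq := huniq (rootPath hT.isConnected v u) (Walk.cons h Walk.nil)
        (rootPath_isPath _ _ _) hpath
      unfold par
      rw [if_neg hu, heq]
      simp [Walk.getVert_cons_succ, Walk.getVert_zero]
    · by_cases hmem : v ∈ (rootPath hT.isConnected r u).support
      · left
        have htake := (rootPath hT.isConnected r u).take_spec hmem
        have htp : ((rootPath hT.isConnected r u).takeUntil v hmem).IsPath :=
          (rootPath_isPath _ _ _).takeUntil hmem
        have hsingle : (Walk.cons h Walk.nil : T.Walk u v).IsPath := by simp [h.ne]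
        have heq := huniq _ _ htp hsingle
        rw [heq, Walk.cons_append, Walk.nil_append] at htake
        unfold par
        rw [if_neg hu, ← htake]
        simp [Walk.getVert_cons_succ, Walk.getVert_zero]
      · right
        have hpath : (Walk.cons h.symm (rootPath hT.isConnected r u)).IsPath := by
          rw [Walk.cons_isPath_iff]
          exact ⟨rootPath_isPath _ _ _, hmem⟩
        have heq := huniq (rootPath hT.isConnected r v) _ (rootPath_isPath _ _ _) hpath
        unfold par
        rw [if_neg hvr, heq, Walk.getVert_cons_succ, Walk.getVert_zero]

/-- `G` has a tree decomposition of width at most `w`. -/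
def HasTDWidth {V : Type} (G : SimpleGraph V) (w : ℕ) : Prop :=
  ∃ (ι : Type) (t : SimpleGraph ι) (bag : ι → Finset V),
    t.IsTree ∧
    (∀ v : V, ∃ i, v ∈ bag i) ∧
    (∀ u v : V, G.Adj u v → ∃ i, u ∈ bag i ∧ v ∈ bag i) ∧
    (∀ v : V, (t.induce {i | v ∈ bag i}).Connected) ∧
    (∀ i, (bag i).card ≤ w + 1)

/-- The treewidth of a graph: the least width of a tree decomposition. -/
def treewidth {V : Type} (G : SimpleGraph V) : ℕ := sInf {w | HasTDWidth G w}

/-- A connected graph with `n` vertices and exactly `n - 2 + ℓ` edges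
(`ℓ ≥ 1`) has treewidth at most `ℓ`. -/
theorem treewidth_le_of_excess {V : Type} [Fintype V] (G : SimpleGraph V) (ℓ : ℕ)
    (hconn : G.Connected) (hℓ : 1 ≤ ℓ)
    (hedges : G.edgeSet.ncard + 2 = Fintype.card V + ℓ) :
    treewidth G ≤ ℓ := by
  classical
  have hne : Nonempty V := hconn.nonempty
  obtain ⟨T, hTG, hT⟩ := exists_spanning_tree G hconn
  obtain ⟨r⟩ := hne
  haveI : Fintype ↥G.edgeSet := Set.Finite.fintype (Set.toFinite _)
  haveI : Fintype ↥T.edgeSet := Set.Finite.fintype (Set.toFinite _)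
  have hTcard : T.edgeFinset.card + 1 = Fintype.card V := hT.card_edgeFinset
  have hGcard : G.edgeFinset.card + 2 = Fintype.card V + ℓ := by
    rwa [Set.ncard_eq_toFinset_card'] at hedges
  have hsub : T.edgeFinset ⊆ G.edgeFinset := SimpleGraph.edgeFinset_mono hTG
  set D : Finset (Sym2 V) := G.edgeFinset \ T.edgeFinset with hD
  have hDcard : D.card + 1 = ℓ := by
    have h1 : D.card + T.edgeFinset.card = G.edgeFinset.card :=
      Finset.card_sdiff_add_card_eq_card hsub
    omega
  set X : Finset V := D.image (fun e => e.out.1) with hX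
  have hXle : X.card ≤ D.card := by
    rw [hX]
    exact Finset.card_image_le
  have hXcard : X.card + 1 ≤ ℓ := by omega
  have hmem : HasTDWidth G ℓ := by
    refine ⟨V, T, fun i => insert i (insert (par hT.isConnected r i) X), hT, ?_, ?_, ?_, ?_⟩
    · exact fun v => ⟨v, Finset.mem_insert_self _ _⟩
    · intro u v huv
      by_cases ht : T.Adj u v
      · rcases par_adj_cases hT r ht with hpu | hpv
        · exact ⟨u, Finset.mem_insert_self _ _,
            hpu ▸ Finset.mem_insert_of_mem (Finset.mem_insert_self _ _)⟩
        · exact ⟨v, hpv ▸ Finset.mem_insert_of_mem (Finset.mem_insert_self _ _),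
            Finset.mem_insert_self _ _⟩
      · have hDe : s(u, v) ∈ D := by
          rw [hD, Finset.mem_sdiff]
          refine ⟨SimpleGraph.mem_edgeFinset.mpr (G.mem_edgeSet.mpr huv), fun hc => ?_⟩
          exact ht (T.mem_edgeSet.mp (SimpleGraph.mem_edgeFinset.mp hc))
        have hout : (s(u, v)).out.1 ∈ X := Finset.mem_image_of_mem _ hDe
        have houtmem : (s(u, v)).out.1 ∈ s(u, v) := Sym2.out_fst_mem _
        rw [Sym2.mem_iff] at houtmem
        rcases houtmem with h1 | h1
        · exact ⟨v, Finset.mem_insert_of_mem (Finset.mem_insert_of_mem (h1 ▸ hout)),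
            Finset.mem_insert_self _ _⟩
        · exact ⟨u, Finset.mem_insert_self _ _,
            Finset.mem_insert_of_mem (Finset.mem_insert_of_mem (h1 ▸ hout))⟩
    · intro w
      show (T.induce {i : V | w ∈ insert i (insert (par hT.isConnected r i) X)}).Connected
      by_cases hw : w ∈ X
      · have huniv : {i : V | w ∈ insert i (insert (par hT.isConnected r i) X)} = Set.univ :=
          Set.eq_univ_of_forall fun i =>
            Finset.mem_insert_of_mem (Finset.mem_insert_of_mem hw)
        rw [huniv]
        exact (SimpleGraph.Iso.connected_iff (SimpleGraph.induceUnivIso T)).mpr hT.isConnected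
      · set S : Set V := {i : V | w ∈ insert i (insert (par hT.isConnected r i) X)} with hS
        have hwS : w ∈ S := Finset.mem_insert_self _ _
        haveI : Nonempty ↥S := ⟨⟨w, hwS⟩⟩
        have key : ∀ (i : V) (hi : i ∈ S),
            (T.induce S).Reachable ⟨i, hi⟩ ⟨w, hwS⟩ := by
          intro i hi
          have hi' : w = i ∨ w = par hT.isConnected r i ∨ w ∈ X := by
            simpa [hS, Finset.mem_insert] using hi
          by_cases hiw : i = w
          · subst hiw
            exact Reachable.refl _
          · rcases hi' with h1 | h1 | h1
            · exact absurd h1.symm hiw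
            · have hir : i ≠ r := by
                intro hir
                rw [hir, par_self] at h1
                exact hiw (hir.trans h1.symm)
              have hadj : T.Adj i w := h1 ▸ adj_par hT.isConnected r hir
              have : (T.induce S).Adj ⟨i, hi⟩ ⟨w, hwS⟩ := hadj
              exact this.reachable
            · exact absurd h1 hw
        exact ⟨fun a b => ((key a a.2).trans (key b b.2).symm)⟩
    · intro i
      show (insert i (insert (par hT.isConnected r i) X)).card ≤ ℓ + 1
      have h1 := Finset.card_insert_le i (insert (par hT.isConnected r i) X)
      have h2 := Finset.card_insert_le (par hT.isConnected r i) X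
      omega
  exact Nat.sInf_le hmem
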